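/- Let L = L₀ ⊕ L₁ be a non-degenerate naturally graded Leibniz superalgebra over ℂ with super-nilindex (n,2) where n ≥ 3. Then n = 3, and L is isomorphic to exactly one of the following two non-isomorphic Leibniz superalgebras on a basis {X₁,X₂,X₃,Y₁,Y₂}: μ₂ with nonzero products [X_i,X₁] = X_{i+1} for 1 ≤ i ≤ 2, [Y₁,X₁] = Y₂, [Y₁,Y₁] = X₂, [Y₂,Y₁] = X₃; or μ₃ with nonzero products [X_i,X₁] = X_{i+1} for 1 ≤ i ≤ 2, [X₁,Y₁] = −Y₂, [Y₁,X₁] = Y₂, [Y₁,Y₁] = X₂, [Y₁,Y₂] = X₃. -/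

import Mathlib

/-- The sign `(-1)^(j·k)` for parities `j k : ZMod 2`, as a complex scalar. -/
def ssign (i j : ZMod 2) : ℂ := if i = 1 ∧ j = 1 then -1 else 1

/-- A (complex) Leibniz superalgebra structure on the vector space `V`: a ℤ₂-grading
`g` whose parts are complementary, together with an even bilinear product satisfying
the super Leibniz identity
`[x,[y,z]] = [[x,y],z] − (−1)^{|y||z|}[[x,z],y]` for homogeneous `y, z`. -/
structure LeibnizSuperAlg (V : Type*) [AddCommGroup V] [Module ℂ V] where
  g : ZMod 2 → Submodule ℂ V
  bk : V →ₗ[ℂ] V →ₗ[ℂ] V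
  compl : IsCompl (g 0) (g 1)
  grading : ∀ i j : ZMod 2, ∀ x ∈ g i, ∀ y ∈ g j, bk x y ∈ g (i + j)
  leibniz : ∀ j k : ZMod 2, ∀ x : V, ∀ y ∈ g j, ∀ z ∈ g k,
    bk x (bk y z) = bk (bk x y) z - ssign j k • bk (bk x z) y

namespace LeibnizSuperAlg

variable {V : Type*} [AddCommGroup V] [Module ℂ V]

/-- The descending sequences `C⁰(L_i) = L_i`, `C^{k+1}(L_i) = [C^k(L_i), L₀]`. -/
def C (A : LeibnizSuperAlg V) (i : ZMod 2) : ℕ → Submodule ℂ V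
  | 0 => A.g i
  | k + 1 => Submodule.span ℂ {z | ∃ x ∈ C A i k, ∃ y ∈ A.g 0, z = A.bk x y}

/-- The descending central sequence of the whole superalgebra. -/
def DC (A : LeibnizSuperAlg V) : ℕ → Submodule ℂ V
  | 0 => ⊤
  | k + 1 => Submodule.span ℂ {z | ∃ x ∈ DC A k, ∃ y : V, z = A.bk x y}

/-- Nilpotency: the descending central sequence reaches zero. -/
def IsNilpotent (A : LeibnizSuperAlg V) : Prop := ∃ k, A.DC k = ⊥

/-- `A` is nilpotent with `dim L₀ = n`, `dim L₁ = m` and super-nilindex `(n, m)`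
(the maximal possible value). -/
def HasMaxSNilindex (A : LeibnizSuperAlg V) (n m : ℕ) : Prop :=
  A.IsNilpotent ∧ Module.finrank ℂ (A.g 0) = n ∧ Module.finrank ℂ (A.g 1) = m ∧
    A.C 0 (n - 1) ≠ ⊥ ∧ A.C 1 (m - 1) ≠ ⊥ ∧ A.C 0 n = ⊥ ∧ A.C 1 m = ⊥

/-- Non-degeneracy: the product does not vanish identically on `L₁ × L₁`. -/
def NonDegenerate (A : LeibnizSuperAlg V) : Prop :=
  ∃ x ∈ A.g 1, ∃ y ∈ A.g 1, A.bk x y ≠ 0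

/-- `A` is naturally graded: there are subspaces `W a i` (`i ≥ 1`, parity `a`), splitting
the filtrations `C` (so that `W a i ≅ C^{i-1}(L_a)/C^i(L_a)` and `L ≅ gr(L)` in the
natural way) and compatible with the product (so `gr(L)` is a graded Leibniz
superalgebra, `[Lⁱ, Lʲ] ⊆ L^{i+j}`).  For finite-dimensional nilpotent superalgebras
this is equivalent to the textbook definition `L ≅ gr(L)` with `gr(L)` graded. -/
def NaturallyGraded (A : LeibnizSuperAlg V) : Prop :=
  ∃ W : ZMod 2 → ℕ → Submodule ℂ V,
    (∀ a, W a 0 = ⊥) ∧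
    (∀ a k, A.C a k = W a (k + 1) ⊔ A.C a (k + 1)) ∧
    (∀ a k, W a (k + 1) ⊓ A.C a (k + 1) = ⊥) ∧
    (∀ a b : ZMod 2, ∀ i j : ℕ, ∀ x ∈ W a i, ∀ y ∈ W b j, A.bk x y ∈ W (a + b) (i + j))

/-- `X 1, …, X n` and `Y 1, …, Y m` form an adapted basis of the superalgebra:
the `X i` are even, the `Y j` are odd, and together they form a basis of `V`. -/
def IsAdaptedBasis (A : LeibnizSuperAlg V) (n m : ℕ) (X Y : ℕ → V) : Prop :=
  (∀ i, 1 ≤ i → i ≤ n → X i ∈ A.g 0) ∧ (∀ j, 1 ≤ j → j ≤ m → Y j ∈ A.g 1) ∧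
  LinearIndependent ℂ
    (Sum.elim (fun i : Fin n => X (i.val + 1)) (fun j : Fin m => Y (j.val + 1))) ∧
  Submodule.span ℂ
    (Set.range (Sum.elim (fun i : Fin n => X (i.val + 1)) (fun j : Fin m => Y (j.val + 1)))) = ⊤

end LeibnizSuperAlg

/-- The Leibniz superalgebra `μ₂` of super-nilindex `(3,2)`. -/
def LawMu2 {V : Type*} [AddCommGroup V] [Module ℂ V] (A : LeibnizSuperAlg V) : Prop :=
  ∃ X Y : ℕ → V, A.IsAdaptedBasis 3 2 X Y ∧
    (∀ i j : ℕ, 1 ≤ i → i ≤ 3 → 1 ≤ j → j ≤ 3 → A.bk (X i) (X j) =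
      if j = 1 ∧ 1 ≤ i ∧ i ≤ 2 then X (i + 1) else 0) ∧
    (∀ i j : ℕ, 1 ≤ i → i ≤ 3 → 1 ≤ j → j ≤ 2 → A.bk (X i) (Y j) =
      0) ∧
    (∀ i j : ℕ, 1 ≤ i → i ≤ 2 → 1 ≤ j → j ≤ 3 → A.bk (Y i) (X j) =
      if i = 1 ∧ j = 1 then Y 2 else 0) ∧
    (∀ i j : ℕ, 1 ≤ i → i ≤ 2 → 1 ≤ j → j ≤ 2 → A.bk (Y i) (Y j) =
      if j = 1 ∧ i ≤ 2 then X (i + 1) else 0)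

/-- The Leibniz superalgebra `μ₃` of super-nilindex `(3,2)`. -/
def LawMu3 {V : Type*} [AddCommGroup V] [Module ℂ V] (A : LeibnizSuperAlg V) : Prop :=
  ∃ X Y : ℕ → V, A.IsAdaptedBasis 3 2 X Y ∧
    (∀ i j : ℕ, 1 ≤ i → i ≤ 3 → 1 ≤ j → j ≤ 3 → A.bk (X i) (X j) =
      if j = 1 ∧ 1 ≤ i ∧ i ≤ 2 then X (i + 1) else 0) ∧
    (∀ i j : ℕ, 1 ≤ i → i ≤ 3 → 1 ≤ j → j ≤ 2 → A.bk (X i) (Y j) =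
      if i = 1 ∧ j = 1 then -Y 2 else 0) ∧
    (∀ i j : ℕ, 1 ≤ i → i ≤ 2 → 1 ≤ j → j ≤ 3 → A.bk (Y i) (X j) =
      if i = 1 ∧ j = 1 then Y 2 else 0) ∧
    (∀ i j : ℕ, 1 ≤ i → i ≤ 2 → 1 ≤ j → j ≤ 2 → A.bk (Y i) (Y j) =
      if i = 1 ∧ j = 1 then X 2 else if i = 1 ∧ j = 2 then X 3 else 0)

namespace LeibnizSuperAlg

variable {V : Type*} [AddCommGroup V] [Module ℂ V]

theorem C_zero' (A : LeibnizSuperAlg V) (a : ZMod 2) : A.C a 0 = A.g a := rfl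

theorem C_succ' (A : LeibnizSuperAlg V) (a : ZMod 2) (k : ℕ) :
    A.C a (k + 1) = Submodule.span ℂ {z | ∃ x ∈ A.C a k, ∃ y ∈ A.g 0, z = A.bk x y} := rfl

theorem bk_mem_C (A : LeibnizSuperAlg V) {a : ZMod 2} {k : ℕ} {x y : V}
    (hx : x ∈ A.C a k) (hy : y ∈ A.g 0) : A.bk x y ∈ A.C a (k + 1) :=
  Submodule.subset_span ⟨x, hx, y, hy, rfl⟩

theorem C_succ_le (A : LeibnizSuperAlg V) (a : ZMod 2) : ∀ k, A.C a (k + 1) ≤ A.C a k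
  | 0 => by
    rw [C_succ', C_zero']
    refine Submodule.span_le.2 ?_
    rintro z ⟨x, hx, y, hy, rfl⟩
    simpa using A.grading a 0 x hx y hy
  | (k + 1) => by
    rw [C_succ' A a (k + 1)]
    refine Submodule.span_le.2 ?_
    rintro z ⟨x, hx, y, hy, rfl⟩
    exact A.bk_mem_C (C_succ_le A a k hx) hy

theorem C_antitone (A : LeibnizSuperAlg V) (a : ZMod 2) : Antitone (A.C a) :=
  antitone_nat_of_succ_le (C_succ_le A a)

theorem C_le_g (A : LeibnizSuperAlg V) (a : ZMod 2) (k : ℕ) : A.C a k ≤ A.g a :=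
  le_trans (C_antitone A a (Nat.zero_le k)) (le_of_eq (C_zero' A a))

theorem C_stab (A : LeibnizSuperAlg V) (a : ZMod 2) (k : ℕ) (h : A.C a (k + 1) = A.C a k) :
    ∀ j, A.C a (k + j) = A.C a k
  | 0 => rfl
  | (j + 1) => by
    rw [show k + (j + 1) = (k + j) + 1 from rfl, C_succ', C_stab A a k h j, ← C_succ', h]

end LeibnizSuperAlg

open Module in
theorem eq_span_of_finrank_one {V : Type*} [AddCommGroup V] [Module ℂ V] [FiniteDimensional ℂ V]
    {S : Submodule ℂ V} (hS : finrank ℂ S = 1) {x : V} (hx : x ∈ S) (hx0 : x ≠ 0) :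
    S = Submodule.span ℂ {x} :=
  (Submodule.eq_of_le_of_finrank_le ((Submodule.span_singleton_le_iff_mem x S).2 hx)
    (by rw [finrank_span_singleton hx0, hS])).symm

theorem smul_cancel_right {V : Type*} [AddCommGroup V] [Module ℂ V] {c d : ℂ} {v : V}
    (hv : v ≠ 0) (h : c • v = d • v) : c = d := by
  have h1 : (c - d) • v = 0 := by rw [sub_smul, h, sub_self]
  rcases smul_eq_zero.1 h1 with h2 | h2
  · exact sub_eq_zero.1 h2
  · exact absurd h2 hv
/-- For `n ≥ 3`, a non-degenerate naturally graded Leibniz superalgebra of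
super-nilindex `(n,2)` exists only for `n = 3`, and it is isomorphic to exactly
one of the two non-isomorphic superalgebras `μ₂`, `μ₃`. -/
theorem stmt12 {V : Type*} [AddCommGroup V] [Module ℂ V] [FiniteDimensional ℂ V] (A : LeibnizSuperAlg V) (n : ℕ) (hn : 3 ≤ n)
    (h : A.HasMaxSNilindex n 2) (hnd : A.NonDegenerate) (hng : A.NaturallyGraded) :
    n = 3 ∧ (LawMu2 A ∨ LawMu3 A) ∧ ¬(LawMu2 A ∧ LawMu3 A) := by
  classical
  obtain ⟨hnil, hd0, hd1, hC0ne, hC1ne, hC0n, hC1m⟩ := h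
  obtain ⟨W, hWzero, hWsup, hWdis, hWbk⟩ := hng
  have hWle : ∀ (a : ZMod 2) (k : ℕ), W a (k+1) ≤ A.C a k := fun a k => (hWsup a k) ▸ le_sup_left
  have hrank : ∀ (a : ZMod 2) (k : ℕ),
      Module.finrank ℂ (A.C a k) = Module.finrank ℂ (W a (k+1)) + Module.finrank ℂ (A.C a (k+1)) := by
    intro a k
    have h1 := Submodule.finrank_sup_add_finrank_inf_eq (W a (k+1)) (A.C a (k+1))
    rw [hWdis a k, ← hWsup a k, finrank_bot] at h1
    omega
  have hCne : ∀ k, k < n → A.C 0 (k+1) ≠ A.C 0 k := by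
    intro k hk heq
    have hst := A.C_stab 0 k heq (n - k)
    rw [show k + (n - k) = n from by omega] at hst
    apply hC0ne
    have h1 : A.C 0 k = ⊥ := by rw [← hst, hC0n]
    have h2 : A.C 0 (n-1) ≤ A.C 0 k := A.C_antitone 0 (by omega)
    rw [h1] at h2
    exact le_bot_iff.1 h2
  have hrank_lt : ∀ k, k < n → Module.finrank ℂ (A.C 0 (k+1)) < Module.finrank ℂ (A.C 0 k) :=
    fun k hk => Submodule.finrank_lt_finrank_of_lt (lt_of_le_of_ne (A.C_succ_le 0 k) (hCne k hk))
  have hd00 : Module.finrank ℂ (A.C 0 0) = n := hd0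
  have hlow : ∀ d k, k + d = n → d ≤ Module.finrank ℂ (A.C 0 k) := by
    intro d
    induction d with
    | zero => exact fun k _ => Nat.zero_le _
    | succ d ih =>
      intro k hk
      have h1 := ih (k+1) (by omega)
      have h2 := hrank_lt k (by omega)
      omega
  have hup : ∀ k, k ≤ n → Module.finrank ℂ (A.C 0 k) ≤ n - k := by
    intro k
    induction k with
    | zero => intro _; omega
    | succ k ih =>
      intro hk
      have h1 := hrank_lt k (by omega)
      have h2 := ih (by omega)
      omega
  have hCrank : ∀ k, k ≤ n → Module.finrank ℂ (A.C 0 k) = n - k := by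
    intro k hk
    have h1 := hlow (n - k) k (by omega)
    have h2 := hup k hk
    omega
  have hWrank0 : ∀ k, k < n → Module.finrank ℂ (W 0 (k+1)) = 1 := by
    intro k hk
    have h1 := hrank 0 k
    rw [hCrank k (le_of_lt hk), hCrank (k+1) hk] at h1
    omega
  have hC10 : Module.finrank ℂ (A.C 1 0) = 2 := hd1
  have hC12 : A.C 1 2 = ⊥ := hC1m
  have hC11ne : A.C 1 1 ≠ ⊥ := hC1ne
  have hC11neq : A.C 1 1 ≠ A.C 1 0 := by
    intro heq
    have hst := A.C_stab 1 0 heq 2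
    norm_num at hst
    rw [hC12] at hst
    rw [← hst] at hC10
    simp at hC10
  have hC11rank : Module.finrank ℂ (A.C 1 1) = 1 := by
    have h1 : Module.finrank ℂ (A.C 1 1) < Module.finrank ℂ (A.C 1 0) :=
      Submodule.finrank_lt_finrank_of_lt (lt_of_le_of_ne (A.C_succ_le 1 0) hC11neq)
    have h2 : Module.finrank ℂ (A.C 1 1) ≠ 0 := fun h0 => hC11ne (Submodule.finrank_eq_zero.1 h0)
    omega
  have hW11rank : Module.finrank ℂ (W 1 1) = 1 := by
    have h1 : Module.finrank ℂ (A.C 1 0) = Module.finrank ℂ (W 1 1) + Module.finrank ℂ (A.C 1 1) :=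
      hrank 1 0
    omega
  have hW12rank : Module.finrank ℂ (W 1 2) = 1 := by
    have h1 : Module.finrank ℂ (A.C 1 1) = Module.finrank ℂ (W 1 2) + Module.finrank ℂ (A.C 1 2) :=
      hrank 1 1
    rw [hC12, finrank_bot] at h1
    omega
  have hW0bot : ∀ s, n + 1 ≤ s → W 0 s = ⊥ := by
    intro s hs
    have h1 : W 0 s ≤ A.C 0 (s-1) := by
      have h2 := hWle 0 (s-1)
      rw [show s - 1 + 1 = s from by omega] at h2
      exact h2
    have h2 : A.C 0 (s-1) ≤ A.C 0 n := A.C_antitone 0 (by omega)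
    rw [hC0n] at h2
    exact le_bot_iff.1 (le_trans h1 h2)
  have hW1bot : ∀ s, 3 ≤ s → W 1 s = ⊥ := by
    intro s hs
    have h1 : W 1 s ≤ A.C 1 (s-1) := by
      have h2 := hWle 1 (s-1)
      rw [show s - 1 + 1 = s from by omega] at h2
      exact h2
    have h2 : A.C 1 (s-1) ≤ A.C 1 2 := A.C_antitone 1 (by omega)
    rw [hC12] at h2
    exact le_bot_iff.1 (le_trans h1 h2)
  have hCsup : ∀ d m, n ≤ m + d → A.C 0 m ≤ ⨆ j : ℕ, W 0 (m + 1 + j) := by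
    intro d
    induction d with
    | zero =>
      intro m hm
      have h1 : A.C 0 m ≤ A.C 0 n := A.C_antitone 0 (by omega)
      rw [hC0n] at h1
      exact le_trans h1 bot_le
    | succ d ih =>
      intro m hm
      rw [hWsup 0 m]
      apply sup_le
      · simpa using le_iSup (fun j => W 0 (m + 1 + j)) 0
      · refine le_trans (ih (m+1) (by omega)) (iSup_le fun j => ?_)
        have h1 := le_iSup (fun j => W 0 (m + 1 + j)) (j + 1)
        rw [show m + 1 + (j + 1) = m + 1 + 1 + j from by omega] at h1
        exact h1
  have hmap : ∀ (m : ℕ) (φ : V →ₗ[ℂ] V) (T : Submodule ℂ V),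
      (∀ j : ℕ, ∀ w ∈ W 0 (m + 1 + j), φ w ∈ T) → ∀ y ∈ A.C 0 m, φ y ∈ T := by
    intro m φ T hT y hy
    have h1 : (⨆ j : ℕ, W 0 (m + 1 + j)) ≤ T.comap φ :=
      iSup_le fun j w hw => Submodule.mem_comap.2 (hT j w hw)
    exact Submodule.mem_comap.1 (h1 (hCsup n m (by omega) hy))
  have p00 : (0 : ZMod 2) + 0 = 0 := by decide
  have p01 : (0 : ZMod 2) + 1 = 1 := by decide
  have p10 : (1 : ZMod 2) + 0 = 1 := by decide
  have p11 : (1 : ZMod 2) + 1 = 0 := by decide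
    -- choose X1
  have hW01rank : Module.finrank ℂ (W 0 1) = 1 := hWrank0 0 (by omega)
  obtain ⟨X1, hX1W, hX1ne⟩ : ∃ x ∈ W 0 1, x ≠ 0 := by
    rw [← Submodule.ne_bot_iff]
    intro hb
    rw [hb, finrank_bot] at hW01rank
    omega
  have hW01 : W 0 1 = Submodule.span ℂ {X1} := eq_span_of_finrank_one hW01rank hX1W hX1ne
  have hX1g : X1 ∈ A.g 0 := (A.C_le_g 0 0) (hWle 0 0 hX1W)
  -- the key step lemma
  have step : ∀ k, k + 2 ≤ n → ∀ x, x ∈ W 0 (k+1) → x ≠ 0 → A.bk x X1 ≠ 0 := by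
    intro k hk x hxW hxne h0
    have hWk : W 0 (k+1) = Submodule.span ℂ {x} :=
      eq_span_of_finrank_one (hWrank0 k (by omega)) hxW hxne
    have hle : A.C 0 (k+1) ≤ A.C 0 (k+2) := by
      rw [A.C_succ' 0 k]
      refine Submodule.span_le.2 ?_
      rintro z ⟨u, hu, y, hy, rfl⟩
      rw [hWsup 0 k, hWk] at hu
      obtain ⟨u1, hu1, u2, hu2, rfl⟩ := Submodule.mem_sup.1 hu
      obtain ⟨a, rfl⟩ := Submodule.mem_span_singleton.1 hu1
      have hy' : y ∈ W 0 1 ⊔ A.C 0 1 := by rw [← hWsup 0 0]; exact hy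
      rw [hW01] at hy'
      obtain ⟨y1, hy1, y2, hy2, hyeq⟩ := Submodule.mem_sup.1 hy'
      obtain ⟨b, rfl⟩ := Submodule.mem_span_singleton.1 hy1
      have hxy' : A.bk x y2 ∈ A.C 0 (k+2) := by
        refine hmap 1 (A.bk x) (A.C 0 (k+2)) ?_ y2 hy2
        intro j w hw
        have hb := hWbk 0 0 (k+1) (1+1+j) x hxW w hw
        rw [p00] at hb
        have hW' : W 0 ((k+1) + (1+1+j)) ≤ A.C 0 (k+2) := by
          have h1 : W 0 ((k+1)+(1+1+j)) ≤ A.C 0 (k+2+j) := by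
            have h2 := hWle 0 (k+2+j)
            rw [show k+2+j+1 = (k+1)+(1+1+j) from by omega] at h2
            exact h2
          exact le_trans h1 (A.C_antitone 0 (by omega))
        exact hW' hb
      have e1 : A.bk (a • x + u2) y = a • A.bk x y + A.bk u2 y := by
        simp [map_add, map_smul, LinearMap.add_apply, LinearMap.smul_apply]
      have e2 : A.bk x y = A.bk x y2 := by
        rw [← hyeq]
        simp [map_add, map_smul, h0]
      rw [e1, e2]
      exact Submodule.add_mem _ (Submodule.smul_mem _ a hxy') (A.bk_mem_C hu2 hy)
    exact hCne (k+1) (by omega) (le_antisymm (A.C_succ_le 0 (k+1)) hle)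
  -- X2 and X3
  set X2 : V := A.bk X1 X1 with hX2def
  have hX2W : X2 ∈ W 0 2 := by
    have h1 := hWbk 0 0 1 1 X1 hX1W X1 hX1W
    rw [p00] at h1
    exact h1
  have hX2ne : X2 ≠ 0 := step 0 (by omega) X1 hX1W hX1ne
  have hW02 : W 0 2 = Submodule.span ℂ {X2} := eq_span_of_finrank_one (hWrank0 1 (by omega)) hX2W hX2ne
  have hX2g : X2 ∈ A.g 0 := (A.C_le_g 0 1) (hWle 0 1 hX2W)
  set X3 : V := A.bk X2 X1 with hX3def
  have hX3W : X3 ∈ W 0 3 := by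
    have h1 := hWbk 0 0 2 1 X2 hX2W X1 hX1W
    rw [p00] at h1
    exact h1
  have hX3ne : X3 ≠ 0 := step 1 (by omega) X2 hX2W hX2ne
  have hW03 : W 0 3 = Submodule.span ℂ {X3} := eq_span_of_finrank_one (hWrank0 2 (by omega)) hX3W hX3ne
  have hX3g : X3 ∈ A.g 0 := (A.C_le_g 0 2) (hWle 0 2 hX3W)
  -- choose Y1
  obtain ⟨Y1, hY1W, hY1ne⟩ : ∃ x ∈ W 1 1, x ≠ 0 := by
    rw [← Submodule.ne_bot_iff]
    intro hb
    rw [hb, finrank_bot] at hW11rank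
    omega
  have hW11 : W 1 1 = Submodule.span ℂ {Y1} := eq_span_of_finrank_one hW11rank hY1W hY1ne
  have hY1g : Y1 ∈ A.g 1 := (A.C_le_g 1 0) (hWle 1 0 hY1W)
  set Y2 : V := A.bk Y1 X1 with hY2def
  have hY2W : Y2 ∈ W 1 2 := by
    have h1 := hWbk 1 0 1 1 Y1 hY1W X1 hX1W
    rw [p10] at h1
    exact h1
  -- Y2 ≠ 0
  have hY2ne : Y2 ≠ 0 := by
    intro h0
    apply hC11ne
    have hle : A.C 1 1 ≤ Submodule.span ℂ {Y2} := by
      rw [A.C_succ' 1 0]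
      refine Submodule.span_le.2 ?_
      rintro z ⟨u, hu, y, hy, rfl⟩
      have hu' : u ∈ W 1 1 ⊔ A.C 1 1 := by rw [← hWsup 1 0]; exact hu
      rw [hW11, hWsup 1 1, hC12, sup_bot_eq] at hu'
      obtain ⟨u1, hu1, u2, hu2, rfl⟩ := Submodule.mem_sup.1 hu'
      obtain ⟨a, rfl⟩ := Submodule.mem_span_singleton.1 hu1
      have hy' : y ∈ W 0 1 ⊔ A.C 0 1 := by rw [← hWsup 0 0]; exact hy
      rw [hW01] at hy'
      obtain ⟨y1, hy1, y2, hy2, hyeq⟩ := Submodule.mem_sup.1 hy'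
      obtain ⟨b, rfl⟩ := Submodule.mem_span_singleton.1 hy1
      -- [Y1, y2] = 0
      have hz1 : A.bk Y1 y2 = 0 := by
        have h1 : A.bk Y1 y2 ∈ (⊥ : Submodule ℂ V) := by
          refine hmap 1 (A.bk Y1) ⊥ ?_ y2 hy2
          intro j w hw
          have hb := hWbk 1 0 1 (1+1+j) Y1 hY1W w hw
          rw [p10, hW1bot (1+(1+1+j)) (by omega)] at hb
          exact hb
        simpa using h1
      have hz2a : A.bk u2 X1 = 0 := by
        have hb := hWbk 1 0 2 1 u2 hu2 X1 hX1W
        have hb' : A.bk u2 X1 ∈ W 1 3 := by rw [p10] at hb; exact hb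
        rw [hW1bot 3 (by omega)] at hb'
        simpa using hb'
      have hz2b : A.bk u2 y2 = 0 := by
        have h1 : A.bk u2 y2 ∈ (⊥ : Submodule ℂ V) := by
          refine hmap 1 (A.bk u2) ⊥ ?_ y2 hy2
          intro j w hw
          have hb := hWbk 1 0 2 (1+1+j) u2 hu2 w hw
          rw [p10, hW1bot (2+(1+1+j)) (by omega)] at hb
          exact hb
        simpa using h1
      have e1 : A.bk (a • Y1 + u2) y = (a * b) • A.bk Y1 X1 := by
        rw [← hyeq]
        simp [map_add, map_smul, hz1, hz2a, hz2b, smul_smul, mul_comm]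
      rw [e1]
      exact Submodule.smul_mem _ _ (Submodule.mem_span_singleton_self _)
    rw [h0, Submodule.span_zero_singleton] at hle
    exact le_bot_iff.1 hle
  have hW12 : W 1 2 = Submodule.span ℂ {Y2} := eq_span_of_finrank_one hW12rank hY2W hY2ne
  have hY2g : Y2 ∈ A.g 1 := (A.C_le_g 1 1) (hWle 1 1 hY2W)
  have hg1span : A.g 1 = Submodule.span ℂ {Y1} ⊔ Submodule.span ℂ {Y2} := by
    rw [← hW11, ← hW12]
    have h1 : A.g 1 = A.C 1 0 := rfl
    rw [h1, hWsup 1 0, hWsup 1 1, hC12, sup_bot_eq]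
  -- sign values
  have s00 : ssign 0 0 = 1 := by norm_num [ssign]
  have s10 : ssign 1 0 = 1 := by norm_num [ssign]
  have s01 : ssign 0 1 = 1 := by norm_num [ssign]
  have s11 : ssign 1 1 = -1 := by norm_num [ssign]
  -- generic vanishing
  have hzero10 : ∀ (i j : ℕ), 3 ≤ i + j → ∀ x ∈ W 1 i, ∀ y ∈ W 0 j, A.bk x y = 0 := by
    intro i j hij x hx y hy
    have h1 : A.bk x y ∈ W 1 (i + j) := by
      have h2 := hWbk 1 0 i j x hx y hy
      rw [p10] at h2
      exact h2
    rw [hW1bot (i+j) hij] at h1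
    simpa using h1
  have hzero01 : ∀ (i j : ℕ), 3 ≤ i + j → ∀ x ∈ W 0 i, ∀ y ∈ W 1 j, A.bk x y = 0 := by
    intro i j hij x hx y hy
    have h1 : A.bk x y ∈ W 1 (i + j) := by
      have h2 := hWbk 0 1 i j x hx y hy
      rw [p01] at h2
      exact h2
    rw [hW1bot (i+j) hij] at h1
    simpa using h1
  have hzero11 : ∀ (i j : ℕ), n + 1 ≤ i + j → ∀ x ∈ W 1 i, ∀ y ∈ W 1 j, A.bk x y = 0 := by
    intro i j hij x hx y hy
    have h1 : A.bk x y ∈ W 0 (i + j) := by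
      have h2 := hWbk 1 1 i j x hx y hy
      rw [p11] at h2
      exact h2
    rw [hW0bot (i+j) hij] at h1
    simpa using h1
  have hzero00 : ∀ (i j : ℕ), n + 1 ≤ i + j → ∀ x ∈ W 0 i, ∀ y ∈ W 0 j, A.bk x y = 0 := by
    intro i j hij x hx y hy
    have h1 : A.bk x y ∈ W 0 (i + j) := by
      have h2 := hWbk 0 0 i j x hx y hy
      rw [p00] at h2
      exact h2
    rw [hW0bot (i+j) hij] at h1
    simpa using h1
  -- structure constants
  obtain ⟨b, hb⟩ : ∃ b : ℂ, A.bk X1 Y1 = b • Y2 := by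
    have h1 : A.bk X1 Y1 ∈ W 1 2 := by
      have h2 := hWbk 0 1 1 1 X1 hX1W Y1 hY1W
      rw [p01] at h2
      exact h2
    rw [hW12] at h1
    obtain ⟨c, hc⟩ := Submodule.mem_span_singleton.1 h1
    exact ⟨c, hc.symm⟩
  obtain ⟨e, he⟩ : ∃ e : ℂ, A.bk Y1 Y1 = e • X2 := by
    have h1 : A.bk Y1 Y1 ∈ W 0 2 := by
      have h2 := hWbk 1 1 1 1 Y1 hY1W Y1 hY1W
      rw [p11] at h2
      exact h2
    rw [hW02] at h1
    obtain ⟨c, hc⟩ := Submodule.mem_span_singleton.1 h1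
    exact ⟨c, hc.symm⟩
  obtain ⟨f, hf⟩ : ∃ f : ℂ, A.bk Y1 Y2 = f • X3 := by
    have h1 : A.bk Y1 Y2 ∈ W 0 3 := by
      have h2 := hWbk 1 1 1 2 Y1 hY1W Y2 hY2W
      rw [p11] at h2
      exact h2
    rw [hW03] at h1
    obtain ⟨c, hc⟩ := Submodule.mem_span_singleton.1 h1
    exact ⟨c, hc.symm⟩
  obtain ⟨g, hg⟩ : ∃ g : ℂ, A.bk Y2 Y1 = g • X3 := by
    have h1 : A.bk Y2 Y1 ∈ W 0 3 := by
      have h2 := hWbk 1 1 2 1 Y2 hY2W Y1 hY1W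
      rw [p11] at h2
      exact h2
    rw [hW03] at h1
    obtain ⟨c, hc⟩ := Submodule.mem_span_singleton.1 h1
    exact ⟨c, hc.symm⟩
  -- [X1, X2] = 0
  have hX1X2 : A.bk X1 X2 = 0 := by
    have h1 := A.leibniz 0 0 X1 X1 hX1g X1 hX1g
    rw [s00, one_smul, ← hX2def] at h1
    simpa using h1
  -- relation 1 : f = e - g
  have rel1 : f = e - g := by
    have h1 := A.leibniz 1 0 Y1 Y1 hY1g X1 hX1g
    rw [s10, one_smul, ← hY2def, hf, hg, he, map_smul, LinearMap.smul_apply, ← hX3def] at h1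
    refine smul_cancel_right hX3ne ?_
    rw [sub_smul]
    exact h1
  -- relation 2 : b * f = g - e
  have rel2 : b * f = g - e := by
    have h1 := A.leibniz 0 1 Y1 X1 hX1g Y1 hY1g
    rw [s01, one_smul, hb, ← hY2def, hg, he, map_smul, map_smul, LinearMap.smul_apply,
      ← hX3def, hf, smul_smul] at h1
    refine smul_cancel_right hX3ne ?_
    rw [sub_smul]
    exact h1
  -- relation 3 : b * g = 0
  have rel3 : b * g = 0 := by
    have h1 := A.leibniz 1 1 X1 Y1 hY1g Y1 hY1g
    rw [s11, he, hb, map_smul, map_smul, LinearMap.smul_apply] at h1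
    rw [hX1X2, smul_zero, hg, smul_smul, neg_one_smul, sub_neg_eq_add, ← add_smul] at h1
    have h2 : (0:ℂ) • X3 = (b * g + b * g) • X3 := by rw [zero_smul]; exact h1
    have h3 := smul_cancel_right hX3ne h2
    have h4 : (2:ℂ) * (b * g) = 0 := by linear_combination h3.symm
    rcases mul_eq_zero.1 h4 with h5 | h5
    · norm_num at h5
    · exact h5
  -- n = 3
  have hn3 : n = 3 := by
    by_contra hne
    have h4n : 4 ≤ n := by omega
    set X4 : V := A.bk X3 X1 with hX4def
    have hX4W : X4 ∈ W 0 4 := by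
      have h1 := hWbk 0 0 3 1 X3 hX3W X1 hX1W
      rw [p00] at h1
      exact h1
    have hX4ne : X4 ≠ 0 := step 2 (by omega) X3 hX3W hX3ne
    have hW04 : W 0 4 = Submodule.span ℂ {X4} :=
      eq_span_of_finrank_one (hWrank0 3 (by omega)) hX4W hX4ne
    obtain ⟨q, hq⟩ : ∃ q : ℂ, A.bk Y2 Y2 = q • X4 := by
      have h1 : A.bk Y2 Y2 ∈ W 0 4 := by
        have h2 := hWbk 1 1 2 2 Y2 hY2W Y2 hY2W
        rw [p11] at h2
        exact h2
      rw [hW04] at h1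
      obtain ⟨c, hc⟩ := Submodule.mem_span_singleton.1 h1
      exact ⟨c, hc.symm⟩
    have hY2X1 : A.bk Y2 X1 = 0 := hzero10 2 1 (by omega) Y2 hY2W X1 hX1W
    -- rel4 : q = g
    have rel4 : q = g := by
      have h1 := A.leibniz 1 0 Y2 Y1 hY1g X1 hX1g
      rw [s10, one_smul, ← hY2def, hq, hg, hY2X1, map_smul, LinearMap.smul_apply, ← hX4def,
        LinearMap.map_zero₂, sub_zero] at h1
      exact smul_cancel_right hX4ne h1
    -- rel5 : b * q = -g
    have rel5 : b * q = -g := by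
      have h1 := A.leibniz 0 1 Y2 X1 hX1g Y1 hY1g
      rw [s01, one_smul, hb, hY2X1, hg, map_smul, map_smul, LinearMap.smul_apply, ← hX4def,
        LinearMap.map_zero₂, zero_sub, hq, smul_smul] at h1
      refine smul_cancel_right hX4ne ?_
      rw [neg_smul]
      exact h1
    -- rel6 : f = q
    have rel6 : f = q := by
      have h1 := A.leibniz 1 0 Y1 Y2 hY2g X1 hX1g
      rw [s10, one_smul, hY2X1, map_zero, hf, ← hY2def, hq, map_smul, LinearMap.smul_apply,
        ← hX4def] at h1
      have h2 : (0:ℂ) • X4 = (f - q) • X4 := by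
        rw [zero_smul, sub_smul]
        exact h1
      have h3 := smul_cancel_right hX4ne h2
      linear_combination -h3
    -- combine
    have hg0 : g = 0 := by
      have h1 : b * g = -g := by linear_combination rel5 - b * rel4
      rw [rel3] at h1
      linear_combination h1
    have hq0 : q = 0 := by rw [rel4, hg0]
    have hf0 : f = 0 := by rw [rel6, hq0]
    have he0 : e = 0 := by
      have h1 := rel1
      rw [hf0, hg0, sub_zero] at h1
      exact h1.symm
    obtain ⟨x, hx, y, hy, hxy⟩ := hnd
    apply hxy
    rw [hg1span] at hx hy
    obtain ⟨x1, hx1, x2, hx2, rfl⟩ := Submodule.mem_sup.1 hx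
    obtain ⟨a1, rfl⟩ := Submodule.mem_span_singleton.1 hx1
    obtain ⟨a2, rfl⟩ := Submodule.mem_span_singleton.1 hx2
    obtain ⟨y1, hy1, y2, hy2, rfl⟩ := Submodule.mem_sup.1 hy
    obtain ⟨c1, rfl⟩ := Submodule.mem_span_singleton.1 hy1
    obtain ⟨c2, rfl⟩ := Submodule.mem_span_singleton.1 hy2
    have z11 : A.bk Y1 Y1 = 0 := by rw [he, he0, zero_smul]
    have z12 : A.bk Y1 Y2 = 0 := by rw [hf, hf0, zero_smul]
    have z21 : A.bk Y2 Y1 = 0 := by rw [hg, hg0, zero_smul]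
    have z22 : A.bk Y2 Y2 = 0 := by rw [hq, hq0, zero_smul]
    simp [map_add, map_smul, LinearMap.add_apply, LinearMap.smul_apply, z11, z12, z21, z22]
  subst hn3
  -- remaining zero products
  have hY2Y2 : A.bk Y2 Y2 = 0 := hzero11 2 2 (by omega) Y2 hY2W Y2 hY2W
  have zX3X1 : A.bk X3 X1 = 0 := hzero00 3 1 (by omega) X3 hX3W X1 hX1W
  have zX2X2 : A.bk X2 X2 = 0 := hzero00 2 2 (by omega) X2 hX2W X2 hX2W
  have zX1X3 : A.bk X1 X3 = 0 := hzero00 1 3 (by omega) X1 hX1W X3 hX3W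
  have zX2X3 : A.bk X2 X3 = 0 := hzero00 2 3 (by omega) X2 hX2W X3 hX3W
  have zX3X2 : A.bk X3 X2 = 0 := hzero00 3 2 (by omega) X3 hX3W X2 hX2W
  have zX3X3 : A.bk X3 X3 = 0 := hzero00 3 3 (by omega) X3 hX3W X3 hX3W
  have zX1Y2 : A.bk X1 Y2 = 0 := hzero01 1 2 (by omega) X1 hX1W Y2 hY2W
  have zX2Y1 : A.bk X2 Y1 = 0 := hzero01 2 1 (by omega) X2 hX2W Y1 hY1W
  have zX2Y2 : A.bk X2 Y2 = 0 := hzero01 2 2 (by omega) X2 hX2W Y2 hY2W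
  have zX3Y1 : A.bk X3 Y1 = 0 := hzero01 3 1 (by omega) X3 hX3W Y1 hY1W
  have zX3Y2 : A.bk X3 Y2 = 0 := hzero01 3 2 (by omega) X3 hX3W Y2 hY2W
  have zY1X2 : A.bk Y1 X2 = 0 := hzero10 1 2 (by omega) Y1 hY1W X2 hX2W
  have zY1X3 : A.bk Y1 X3 = 0 := hzero10 1 3 (by omega) Y1 hY1W X3 hX3W
  have zY2X1 : A.bk Y2 X1 = 0 := hzero10 2 1 (by omega) Y2 hY2W X1 hX1W
  have zY2X2 : A.bk Y2 X2 = 0 := hzero10 2 2 (by omega) Y2 hY2W X2 hX2W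
  have zY2X3 : A.bk Y2 X3 = 0 := hzero10 2 3 (by omega) Y2 hY2W X3 hX3W
  have bkX1X1 : A.bk X1 X1 = X2 := hX2def.symm
  have bkX2X1 : A.bk X2 X1 = X3 := hX3def.symm
  have bkY1X1 : A.bk Y1 X1 = Y2 := hY2def.symm
  -- non-degeneracy gives e ≠ 0
  have hNotAll : ¬ (e = 0 ∧ f = 0 ∧ g = 0) := by
    rintro ⟨he0, hf0, hg0⟩
    obtain ⟨x, hx, y, hy, hxy⟩ := hnd
    apply hxy
    rw [hg1span] at hx hy
    obtain ⟨x1, hx1, x2, hx2, rfl⟩ := Submodule.mem_sup.1 hx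
    obtain ⟨a1, rfl⟩ := Submodule.mem_span_singleton.1 hx1
    obtain ⟨a2, rfl⟩ := Submodule.mem_span_singleton.1 hx2
    obtain ⟨y1, hy1, y2, hy2, rfl⟩ := Submodule.mem_sup.1 hy
    obtain ⟨c1, rfl⟩ := Submodule.mem_span_singleton.1 hy1
    obtain ⟨c2, rfl⟩ := Submodule.mem_span_singleton.1 hy2
    have z11 : A.bk Y1 Y1 = 0 := by rw [he, he0, zero_smul]
    have z12 : A.bk Y1 Y2 = 0 := by rw [hf, hf0, zero_smul]
    have z21 : A.bk Y2 Y1 = 0 := by rw [hg, hg0, zero_smul]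
    simp [map_add, map_smul, LinearMap.add_apply, LinearMap.smul_apply, z11, z12, z21, hY2Y2]
  have hene : e ≠ 0 := by
    intro he0
    have hg0 : g = 0 := by linear_combination -rel2 + b*rel1 + he0 + b*he0 - rel3
    have hf0 : f = 0 := by linear_combination rel1 + he0 - hg0
    exact hNotAll ⟨he0, hf0, hg0⟩
  -- square root of e⁻¹
  obtain ⟨t, ht⟩ : ∃ t : ℂ, t ^ 2 = e⁻¹ := IsAlgClosed.exists_pow_nat_eq e⁻¹ (by norm_num)
  have htne : t ≠ 0 := by
    intro h0
    rw [h0] at ht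
    have h1 : e⁻¹ = 0 := by simpa using ht.symm
    exact hene (inv_eq_zero.1 h1)
  have hte : t * (t * e) = 1 := by
    have h1 : t * t = e⁻¹ := by rw [← ht]; ring
    rw [← mul_assoc, h1, inv_mul_cancel₀ hene]
  -- spans of g0
  have hg0span : A.g 0 = Submodule.span ℂ {X1} ⊔ (Submodule.span ℂ {X2} ⊔ Submodule.span ℂ {X3}) := by
    rw [← hW01, ← hW02, ← hW03]
    have h1 : A.g 0 = A.C 0 0 := rfl
    rw [h1, hWsup 0 0, hWsup 0 1, hWsup 0 2, hC0n, sup_bot_eq]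
  -- the adapted basis
  have hspan : Submodule.span ℂ (Set.range (Sum.elim
      (fun i : Fin 3 => (fun i => if i = 1 then X1 else if i = 2 then X2 else X3) (i.val + 1))
      (fun j : Fin 2 => (fun j => if j = 1 then t • Y1 else t • Y2) (j.val + 1)))) = ⊤ := by
    apply le_antisymm le_top
    rw [← A.compl.sup_eq_top]
    have m1 : X1 ∈ Submodule.span ℂ (Set.range (Sum.elim
        (fun i : Fin 3 => (fun i => if i = 1 then X1 else if i = 2 then X2 else X3) (i.val + 1))
        (fun j : Fin 2 => (fun j => if j = 1 then t • Y1 else t • Y2) (j.val + 1)))) :=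
      Submodule.subset_span ⟨Sum.inl 0, by norm_num⟩
    have m2 : X2 ∈ Submodule.span ℂ (Set.range (Sum.elim
        (fun i : Fin 3 => (fun i => if i = 1 then X1 else if i = 2 then X2 else X3) (i.val + 1))
        (fun j : Fin 2 => (fun j => if j = 1 then t • Y1 else t • Y2) (j.val + 1)))) :=
      Submodule.subset_span ⟨Sum.inl 1, by norm_num⟩
    have m3 : X3 ∈ Submodule.span ℂ (Set.range (Sum.elim
        (fun i : Fin 3 => (fun i => if i = 1 then X1 else if i = 2 then X2 else X3) (i.val + 1))
        (fun j : Fin 2 => (fun j => if j = 1 then t • Y1 else t • Y2) (j.val + 1)))) :=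
      Submodule.subset_span ⟨Sum.inl 2, by norm_num; intro h; exact absurd h (by decide)⟩
    have m4 : t • Y1 ∈ Submodule.span ℂ (Set.range (Sum.elim
        (fun i : Fin 3 => (fun i => if i = 1 then X1 else if i = 2 then X2 else X3) (i.val + 1))
        (fun j : Fin 2 => (fun j => if j = 1 then t • Y1 else t • Y2) (j.val + 1)))) :=
      Submodule.subset_span ⟨Sum.inr 0, by norm_num⟩
    have m5 : t • Y2 ∈ Submodule.span ℂ (Set.range (Sum.elim
        (fun i : Fin 3 => (fun i => if i = 1 then X1 else if i = 2 then X2 else X3) (i.val + 1))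
        (fun j : Fin 2 => (fun j => if j = 1 then t • Y1 else t • Y2) (j.val + 1)))) :=
      Submodule.subset_span ⟨Sum.inr 1, by norm_num⟩
    have m4' : Y1 ∈ Submodule.span ℂ (Set.range (Sum.elim
        (fun i : Fin 3 => (fun i => if i = 1 then X1 else if i = 2 then X2 else X3) (i.val + 1))
        (fun j : Fin 2 => (fun j => if j = 1 then t • Y1 else t • Y2) (j.val + 1)))) := by
      have h1 := Submodule.smul_mem _ t⁻¹ m4
      rw [smul_smul, inv_mul_cancel₀ htne, one_smul] at h1
      exact h1
    have m5' : Y2 ∈ Submodule.span ℂ (Set.range (Sum.elim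
        (fun i : Fin 3 => (fun i => if i = 1 then X1 else if i = 2 then X2 else X3) (i.val + 1))
        (fun j : Fin 2 => (fun j => if j = 1 then t • Y1 else t • Y2) (j.val + 1)))) := by
      have h1 := Submodule.smul_mem _ t⁻¹ m5
      rw [smul_smul, inv_mul_cancel₀ htne, one_smul] at h1
      exact h1
    apply sup_le
    · rw [hg0span]
      exact sup_le ((Submodule.span_singleton_le_iff_mem _ _).2 m1)
        (sup_le ((Submodule.span_singleton_le_iff_mem _ _).2 m2)
          ((Submodule.span_singleton_le_iff_mem _ _).2 m3))
    · rw [hg1span]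
      exact sup_le ((Submodule.span_singleton_le_iff_mem _ _).2 m4')
        ((Submodule.span_singleton_le_iff_mem _ _).2 m5')
  have hbasis : A.IsAdaptedBasis 3 2 (fun i => if i = 1 then X1 else if i = 2 then X2 else X3)
      (fun j => if j = 1 then t • Y1 else t • Y2) := by
    refine ⟨?_, ?_, ?_, hspan⟩
    · intro i hi1 hi3
      interval_cases i <;> norm_num [hX1g, hX2g, hX3g]
    · intro j hj1 hj2
      interval_cases j <;> norm_num [Submodule.smul_mem, hY1g, hY2g]
    · refine linearIndependent_of_top_le_span_of_card_eq_finrank (le_of_eq hspan.symm) ?_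
      have h1 := Submodule.finrank_add_eq_of_isCompl A.compl
      rw [hd0, hd1] at h1
      simp only [Fintype.card_sum, Fintype.card_fin]
      omega
  refine ⟨rfl, ?_, ?_⟩
  · rcases eq_or_ne b 0 with hb0 | hb0
    · -- μ₂
      left
      have hge : g = e := by linear_combination -rel2 + f*hb0
      have hf0 : f = 0 := by linear_combination rel1 - hge
      have zX1Y1 : A.bk X1 Y1 = 0 := by rw [hb, hb0, zero_smul]
      have z12 : A.bk Y1 Y2 = 0 := by rw [hf, hf0, zero_smul]
      have z21 : A.bk Y2 Y1 = e • X3 := by rw [hg, hge]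
      refine ⟨_, _, hbasis, ?_, ?_, ?_, ?_⟩
      · intro i j hi1 hi3 hj1 hj3
        interval_cases i <;> interval_cases j <;>
          norm_num [bkX1X1, bkX2X1, hX1X2, zX1X3, zX2X2, zX2X3, zX3X1, zX3X2, zX3X3]
      · intro i j hi1 hi3 hj1 hj2
        interval_cases i <;> interval_cases j <;>
          norm_num [map_smul, zX1Y1, zX1Y2, zX2Y1, zX2Y2, zX3Y1, zX3Y2]
      · intro i j hi1 hi2 hj1 hj3
        interval_cases i <;> interval_cases j <;>
          norm_num [map_smul, LinearMap.smul_apply, bkY1X1, zY1X2, zY1X3, zY2X1, zY2X2, zY2X3]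
      · intro i j hi1 hi2 hj1 hj2
        interval_cases i <;> interval_cases j
        · show A.bk (t • Y1) (t • Y1) = X2
          simp only [map_smul, LinearMap.smul_apply, he, smul_smul]
          match_scalars
          linear_combination hte
        · show A.bk (t • Y1) (t • Y2) = 0
          simp only [map_smul, LinearMap.smul_apply, z12, smul_zero]
        · show A.bk (t • Y2) (t • Y1) = X3
          simp only [map_smul, LinearMap.smul_apply, z21, smul_smul]
          match_scalars
          linear_combination hte
        · show A.bk (t • Y2) (t • Y2) = 0
          simp only [map_smul, LinearMap.smul_apply, hY2Y2, smul_zero]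
    · -- μ₃
      right
      have hg0 : g = 0 := (mul_eq_zero.1 rel3).resolve_left hb0
      have hfe : f = e := by linear_combination rel1 - hg0
      have hbe : b * e = -e := by linear_combination rel2 - b*hfe + hg0
      have hbm1 : b = -1 := by
        have h2 : (b + 1) * e = 0 := by linear_combination hbe
        rcases mul_eq_zero.1 h2 with h3 | h3
        · linear_combination h3
        · exact absurd h3 hene
      have zX1Y1 : A.bk X1 Y1 = -Y2 := by rw [hb, hbm1, neg_smul, one_smul]
      have z12 : A.bk Y1 Y2 = e • X3 := by rw [hf, hfe]
      have z21 : A.bk Y2 Y1 = 0 := by rw [hg, hg0, zero_smul]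
      refine ⟨_, _, hbasis, ?_, ?_, ?_, ?_⟩
      · intro i j hi1 hi3 hj1 hj3
        interval_cases i <;> interval_cases j <;>
          norm_num [bkX1X1, bkX2X1, hX1X2, zX1X3, zX2X2, zX2X3, zX3X1, zX3X2, zX3X3]
      · intro i j hi1 hi3 hj1 hj2
        interval_cases i <;> interval_cases j <;>
          norm_num [map_smul, zX1Y1, zX1Y2, zX2Y1, zX2Y2, zX3Y1, zX3Y2, smul_neg]
      · intro i j hi1 hi2 hj1 hj3
        interval_cases i <;> interval_cases j <;>
          norm_num [map_smul, LinearMap.smul_apply, bkY1X1, zY1X2, zY1X3, zY2X1, zY2X2, zY2X3]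
      · intro i j hi1 hi2 hj1 hj2
        interval_cases i <;> interval_cases j
        · show A.bk (t • Y1) (t • Y1) = X2
          simp only [map_smul, LinearMap.smul_apply, he, smul_smul]
          match_scalars
          linear_combination hte
        · show A.bk (t • Y1) (t • Y2) = X3
          simp only [map_smul, LinearMap.smul_apply, z12, smul_smul]
          match_scalars
          linear_combination hte
        · show A.bk (t • Y2) (t • Y1) = 0
          simp only [map_smul, LinearMap.smul_apply, z21, smul_zero]
        · show A.bk (t • Y2) (t • Y2) = 0
          simp only [map_smul, LinearMap.smul_apply, hY2Y2, smul_zero]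
  · -- exclusivity
    rintro ⟨⟨X', Y', hb2, hXX2, hXY2, hYX2, hYY2⟩, ⟨X'', Y'', hb3, hXX3, hXY3, hYX3, hYY3⟩⟩
    obtain ⟨hX'g, hY'g, hli2, hsp2⟩ := hb2
    obtain ⟨hX''g, hY''g, hli3, hsp3⟩ := hb3
    have hY''2ne : Y'' 2 ≠ 0 := by
      have h1 := hli3.ne_zero (Sum.inr 1)
      simpa using h1
    have hSX : Submodule.span ℂ (Set.range (fun i : Fin 3 => X' (i.val + 1))) = A.g 0 := by
      apply Submodule.eq_of_le_of_finrank_le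
      · rw [Submodule.span_le]
        rintro _ ⟨i, rfl⟩
        exact hX'g (i.val + 1) (by omega) (by omega)
      · rw [hd0]
        have h2 : LinearIndependent ℂ (fun i : Fin 3 => X' (i.val + 1)) :=
          hli2.comp Sum.inl Sum.inl_injective
        rw [finrank_span_eq_card h2]
        simp
    have hSY : Submodule.span ℂ (Set.range (fun j : Fin 2 => Y' (j.val + 1))) = A.g 1 := by
      apply Submodule.eq_of_le_of_finrank_le
      · rw [Submodule.span_le]
        rintro _ ⟨j, rfl⟩
        exact hY'g (j.val + 1) (by omega) (by omega)
      · rw [hd1]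
        have h2 : LinearIndependent ℂ (fun j : Fin 2 => Y' (j.val + 1)) :=
          hli2.comp Sum.inr Sum.inr_injective
        rw [finrank_span_eq_card h2]
        simp
    have hzero : ∀ x ∈ A.g 0, ∀ y ∈ A.g 1, A.bk x y = 0 := by
      intro x hx y hy
      rw [← hSX] at hx
      rw [← hSY] at hy
      have h1 : ∀ i : Fin 3, A.bk (X' (i.val+1)) y = 0 := by
        intro i
        have h2 : Submodule.span ℂ (Set.range (fun j : Fin 2 => Y' (j.val + 1))) ≤
            LinearMap.ker (A.bk (X' (i.val+1))) := by
          rw [Submodule.span_le]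
          rintro _ ⟨j, rfl⟩
          simp only [SetLike.mem_coe, LinearMap.mem_ker]
          exact hXY2 (i.val+1) (j.val+1) (by omega) (by omega) (by omega) (by omega)
        exact h2 hy
      have h3 : Submodule.span ℂ (Set.range (fun i : Fin 3 => X' (i.val + 1))) ≤
          LinearMap.ker (A.bk.flip y) := by
        rw [Submodule.span_le]
        rintro _ ⟨i, rfl⟩
        simp only [SetLike.mem_coe, LinearMap.mem_ker, LinearMap.flip_apply]
        exact h1 i
      have h4 := h3 hx
      simp only [LinearMap.mem_ker, LinearMap.flip_apply] at h4
      exact h4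
    have h5 := hzero (X'' 1) (hX''g 1 (by omega) (by omega)) (Y'' 1) (hY''g 1 (by omega) (by omega))
    rw [hXY3 1 1 (by omega) (by omega) (by omega) (by omega)] at h5
    norm_num at h5
    exact hY''2ne h5
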